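/- Let C be a commutative ring that is finitely generated as a ℤ-algebra, and let x ∈ C be a nonzero element. Then there exists an ideal L of C such that x ∉ L and such that the quotient ring C/L is finite. -/

import Mathlib

/-- `ℤ` is a Jacobson ring. -/
instance : IsJacobsonRing ℤ := by
  rw [isJacobsonRing_iff_prime_eq]
  intro P hP
  rcases eq_or_ne P ⊥ with rfl | hPb
  · refine le_antisymm ?_ Ideal.le_jacobson
    intro x hxj
    have h1 := Ideal.mem_jacobson_bot.mp hxj 1
    have h2 := Ideal.mem_jacobson_bot.mp hxj (-1)
    rw [Int.isUnit_iff] at h1 h2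
    simp only [mul_one, mul_neg_one, mul_neg] at h1 h2
    simp only [Ideal.mem_bot]
    omega
  · haveI := hP
    haveI : P.IsMaximal := IsPrime.to_maximal_ideal hPb
    exact Ideal.jacobson_eq_self_of_isMaximal

/-- A field that is a finite `ℤ`-module has nonzero characteristic. -/
theorem aux_char_ne_zero (K : Type*) [Field K] [Module.Finite ℤ K] (p : ℕ)
    [hp : CharP K p] : p ≠ 0 := by
  intro hp0
  subst hp0
  haveI : CharZero K := CharP.charP_to_charZero _
  haveI : IsScalarTower ℤ ℚ K := IsScalarTower.of_algebraMap_eq' (Subsingleton.elim _ _)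
  have h2 : IsIntegral ℤ ((algebraMap ℚ K) 2⁻¹) := IsIntegral.of_finite ℤ _
  have h3 : IsIntegral ℤ ((2 : ℚ)⁻¹) :=
    (isIntegral_algebraMap_iff (algebraMap ℚ K).injective).mp h2
  obtain ⟨y, hy⟩ := IsIntegrallyClosed.isIntegral_iff.mp h3
  have h4 : (2 : ℚ) * (y : ℚ) = 1 := by
    rw [show ((y : ℤ) : ℚ) = algebraMap ℤ ℚ y from rfl, hy]
    norm_num
  have h5 : (2 * y : ℤ) = 1 := by exact_mod_cast h4
  omega

/-- Lemma 2.1: a finitely generated commutative ℤ-algebra is residually finite: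
for every nonzero `x` there is an ideal `L` avoiding `x` with `C ⧸ L` finite. -/
theorem residually_finite_of_finiteType
    (C : Type*) [CommRing C] (hC : Algebra.FiniteType ℤ C)
    (x : C) (hx : x ≠ 0) :
    ∃ L : Ideal C, x ∉ L ∧ Finite (C ⧸ L) := by
  haveI := hC
  haveI : IsNoetherianRing C := Algebra.FiniteType.isNoetherianRing ℤ C
  have hJ : Ideal.torsionOf C C x ≠ ⊤ := by
    simpa [Ideal.torsionOf_eq_top_iff] using hx
  obtain ⟨m, hm, hJm⟩ := Ideal.exists_le_maximal _ hJ
  haveI := hm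
  letI : Field (C ⧸ m) := Ideal.Quotient.field m
  -- find `n` with `x ∉ m ^ n` via the Krull intersection theorem
  have hn : ∃ n : ℕ, x ∉ m ^ n := by
    by_contra h
    push_neg at h
    have hx' : x ∈ (⨅ i : ℕ, m ^ i • ⊤ : Submodule C C) := by
      rw [Submodule.mem_iInf]
      intro i
      rw [smul_eq_mul, Ideal.mul_top]
      exact h i
    obtain ⟨r, hr⟩ := (Ideal.mem_iInf_smul_pow_eq_bot_iff m x).mp hx'
    have h1 : (1 : C) - (r : C) ∈ Ideal.torsionOf C C x := by
      rw [Ideal.mem_torsionOf_iff, sub_smul, one_smul, hr, sub_self]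
    have hone : (1 : C) ∈ m := by
      have := add_mem (hJm h1) r.2
      simpa using this
    exact hm.ne_top ((Ideal.eq_top_iff_one m).mpr hone)
  obtain ⟨n, hxn⟩ := hn
  refine ⟨m ^ n, hxn, ?_⟩
  -- `C ⧸ m` is a finite ℤ-module by the Nullstellensatz (Jacobson rings)
  haveI : Algebra.FiniteType ℤ (C ⧸ m) :=
    Algebra.FiniteType.of_surjective (Ideal.Quotient.mkₐ ℤ m)
      (Ideal.Quotient.mkₐ_surjective ℤ m)
  haveI := finite_of_finite_type_of_isJacobsonRing ℤ (C ⧸ m)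
  haveI : Algebra.FiniteType ℤ (C ⧸ m ^ n) :=
    Algebra.FiniteType.of_surjective (Ideal.Quotient.mkₐ ℤ (m ^ n))
      (Ideal.Quotient.mkₐ_surjective ℤ (m ^ n))
  -- `C ⧸ m ^ n` is integral over ℤ
  haveI hint : Algebra.IsIntegral ℤ (C ⧸ m ^ n) := by
    constructor
    intro y
    obtain ⟨c, rfl⟩ := Ideal.Quotient.mk_surjective y
    have h1 : IsIntegral ℤ (Ideal.Quotient.mk m c) := IsIntegral.of_finite ℤ _
    obtain ⟨g, hgm, hg0⟩ := h1
    refine ⟨g ^ n, hgm.pow _, ?_⟩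
    have hd : Polynomial.eval₂ (algebraMap ℤ C) c g ∈ m := by
      rw [← Ideal.Quotient.eq_zero_iff_mem]
      have := Polynomial.hom_eval₂ g (algebraMap ℤ C) (Ideal.Quotient.mk m) c
      rw [this, Subsingleton.elim ((Ideal.Quotient.mk m).comp (algebraMap ℤ C))
        (algebraMap ℤ (C ⧸ m))]
      exact hg0
    have hdn : (Polynomial.eval₂ (algebraMap ℤ C) c g) ^ n ∈ m ^ n :=
      Ideal.pow_mem_pow hd n
    show Polynomial.eval₂ (algebraMap ℤ (C ⧸ m ^ n)) (Ideal.Quotient.mk (m ^ n) c) (g ^ n) = 0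
    have hcomm := Polynomial.hom_eval₂ (g ^ n) (algebraMap ℤ C) (Ideal.Quotient.mk (m ^ n)) c
    rw [← Subsingleton.elim ((Ideal.Quotient.mk (m ^ n)).comp (algebraMap ℤ C))
      (algebraMap ℤ (C ⧸ m ^ n)), ← hcomm, Polynomial.eval₂_pow,
      Ideal.Quotient.eq_zero_iff_mem]
    exact hdn
  haveI : Module.Finite ℤ (C ⧸ m ^ n) := Algebra.IsIntegral.finite
  -- the characteristic of `C ⧸ m` is a nonzero `p`
  obtain ⟨p, hp⟩ := CharP.exists (C ⧸ m)
  haveI := hp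
  have hp0 : p ≠ 0 := aux_char_ne_zero (C ⧸ m) p
  -- hence `C ⧸ m ^ n` is a torsion group
  have hpm : (p : C) ∈ m := by
    rw [← Ideal.Quotient.eq_zero_iff_mem]
    have h0 : ((p : ℕ) : C ⧸ m) = 0 := CharP.cast_eq_zero _ p
    rwa [← map_natCast (Ideal.Quotient.mk m) p] at h0
  have htor : AddMonoid.IsTorsion (C ⧸ m ^ n) := by
    intro y
    rw [isOfFinAddOrder_iff_nsmul_eq_zero]
    refine ⟨p ^ n, Nat.pow_pos (n := n) (Nat.pos_of_ne_zero hp0), ?_⟩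
    have hpn : ((p : C)) ^ n ∈ m ^ n := Ideal.pow_mem_pow hpm n
    have hcast : ((p ^ n : ℕ) : C ⧸ m ^ n) = 0 := by
      rw [← Ideal.Quotient.eq_zero_iff_mem] at hpn
      push_cast
      simpa using hpn
    rw [nsmul_eq_mul, hcast, zero_mul]
  haveI : AddGroup.FG (C ⧸ m ^ n) := Module.Finite.iff_addGroup_fg.mp ‹_›
  exact AddCommGroup.finite_of_fg_torsion _ htor
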